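/- Let $q_1, q_2, q_3 \in \mathbb{R}^n$ be pairwise distinct unit vectors, with stabilizer parabolic subalgebras $\mathfrak{p}_i = \{\begin{pmatrix} A & b \\ b^t & 0\end{pmatrix} \in \mathfrak{so}(n,1) : Aq_i + b = (b \cdot q_i) q_i\}$. Then $\mathfrak{so}(n,1) = \mathfrak{p}_1 + (\mathfrak{p}_2 \cap \mathfrak{p}_3)$. -/

import Mathlib

open Matrix

lemma vecMulVec_transpose' {n : ℕ} (u v : Fin n → ℝ) :
    (vecMulVec u v)ᵀ = vecMulVec v u := by
  ext i j; simp [vecMulVec_apply, mul_comm]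

lemma vecMulVec_mulVec' {n : ℕ} (u v w : Fin n → ℝ) :
    (vecMulVec u v) *ᵥ w = (v ⬝ᵥ w) • u := by
  ext i
  simp [vecMulVec_apply, mulVec, dotProduct, Finset.mul_sum, mul_assoc, mul_comm, mul_left_comm]

lemma skew_pair {n : ℕ} {A : Matrix (Fin n) (Fin n) ℝ} (hA : Aᵀ = -A) (x y : Fin n → ℝ) :
    A *ᵥ x ⬝ᵥ y = -(A *ᵥ y ⬝ᵥ x) := by
  rw [dotProduct_comm, dotProduct_mulVec]
  have h : y ᵥ* A = -(A *ᵥ y) := by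
    rw [← vecMul_transpose, hA]; simp [vecMul_neg]
  rw [h, neg_dotProduct]

lemma skew_self {n : ℕ} {A : Matrix (Fin n) (Fin n) ℝ} (hA : Aᵀ = -A) (x : Fin n → ℝ) :
    A *ᵥ x ⬝ᵥ x = 0 := by
  have := skew_pair hA x x; linarith

lemma exists_skew {n : ℕ} (x y c d : Fin n → ℝ)
    (hΔ : (x ⬝ᵥ x) * (y ⬝ᵥ y) - (x ⬝ᵥ y) ^ 2 ≠ 0)
    (hcx : c ⬝ᵥ x = 0) (hdy : d ⬝ᵥ y = 0) (hsum : c ⬝ᵥ y + d ⬝ᵥ x = 0) :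
    ∃ M : Matrix (Fin n) (Fin n) ℝ, Mᵀ = -M ∧ M *ᵥ x = c ∧ M *ᵥ y = d := by
  set Δ := (x ⬝ᵥ x) * (y ⬝ᵥ y) - (x ⬝ᵥ y) ^ 2 with hΔdef
  set xs := Δ⁻¹ • ((y ⬝ᵥ y) • x - (x ⬝ᵥ y) • y) with hxsdef
  set ys := Δ⁻¹ • ((x ⬝ᵥ x) • y - (x ⬝ᵥ y) • x) with hysdef
  have hyx : y ⬝ᵥ x = x ⬝ᵥ y := dotProduct_comm y x
  have hxsx : xs ⬝ᵥ x = 1 := by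
    rw [hxsdef]
    simp only [smul_dotProduct, sub_dotProduct, smul_eq_mul, hyx]
    have h : (y ⬝ᵥ y) * (x ⬝ᵥ x) - (x ⬝ᵥ y) * (x ⬝ᵥ y) = Δ := by rw [hΔdef]; ring
    rw [h, inv_mul_cancel₀ hΔ]
  have hxsy : xs ⬝ᵥ y = 0 := by
    rw [hxsdef]
    simp only [smul_dotProduct, sub_dotProduct, smul_eq_mul, hyx]
    ring
  have hysx : ys ⬝ᵥ x = 0 := by
    rw [hysdef]
    simp only [smul_dotProduct, sub_dotProduct, smul_eq_mul, hyx]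
    ring
  have hysy : ys ⬝ᵥ y = 1 := by
    rw [hysdef]
    simp only [smul_dotProduct, sub_dotProduct, smul_eq_mul, hyx]
    have h : (x ⬝ᵥ x) * (y ⬝ᵥ y) - (x ⬝ᵥ y) * (x ⬝ᵥ y) = Δ := by rw [hΔdef]; ring
    rw [h, inv_mul_cancel₀ hΔ]
  refine ⟨vecMulVec c xs - vecMulVec xs c + (vecMulVec d ys - vecMulVec ys d)
      + (d ⬝ᵥ x) • (vecMulVec ys xs - vecMulVec xs ys), ?_, ?_, ?_⟩
  · simp only [transpose_add, transpose_sub, transpose_smul, vecMulVec_transpose']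
    module
  · simp only [add_mulVec, sub_mulVec, smul_mulVec, vecMulVec_mulVec',
      hxsx, hcx, hysx, hxsy, hysy]
    module
  · have hcy : c ⬝ᵥ y = -(d ⬝ᵥ x) := by linarith
    simp only [add_mulVec, sub_mulVec, smul_mulVec, vecMulVec_mulVec',
      hxsx, hcy, hysx, hxsy, hysy, hdy]
    module


/-- The minimal parabolic subalgebra of `𝔰𝔬(n,1)`, realized as the space of pairs
`(A, b)` with `A` antisymmetric and `A q + b = (b ⬝ᵥ q) q`, sitting inside
`Matrix (Fin n) (Fin n) ℝ × (Fin n → ℝ)`. -/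
def parabolic (n : ℕ) (q : Fin n → ℝ) :
    Submodule ℝ (Matrix (Fin n) (Fin n) ℝ × (Fin n → ℝ)) where
  carrier := {p | p.1ᵀ = -p.1 ∧ p.1.mulVec q + p.2 = (p.2 ⬝ᵥ q) • q}
  zero_mem' := by simp
  add_mem' := by
    rintro ⟨A, b⟩ ⟨A', b'⟩ ⟨h1, h2⟩ ⟨h1', h2'⟩
    refine ⟨by simp only [Prod.fst_add, Matrix.transpose_add, h1, h1', neg_add], ?_⟩
    simp only [Prod.fst_add, Prod.snd_add, Matrix.add_mulVec, add_dotProduct, add_smul,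
      ← h2, ← h2']
    abel
  smul_mem' := by
    rintro c ⟨A, b⟩ ⟨h1, h2⟩
    refine ⟨by simp [Matrix.transpose_smul, h1], ?_⟩
    simp only [Prod.smul_fst, Prod.smul_snd, Matrix.smul_mulVec, smul_dotProduct,
      smul_smul, ← smul_add, h2]
    simp [smul_eq_mul]

/-- The Lie algebra `𝔰𝔬(n,1)`, realized as pairs `(A, b)` with `A` antisymmetric. -/
def soN1 (n : ℕ) : Submodule ℝ (Matrix (Fin n) (Fin n) ℝ × (Fin n → ℝ)) where
  carrier := {p | p.1ᵀ = -p.1}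
  zero_mem' := by simp
  add_mem' := by
    rintro ⟨A, b⟩ ⟨A', b'⟩ h1 h1'
    simp only [Set.mem_setOf_eq, Prod.fst_add, Matrix.transpose_add, neg_add] at *
    rw [h1, h1']
  smul_mem' := by
    rintro c ⟨A, b⟩ h1
    simp only [Set.mem_setOf_eq, Prod.smul_fst, Matrix.transpose_smul] at *
    rw [h1, smul_neg]


lemma mem_parabolic {n : ℕ} {q : Fin n → ℝ} {p : Matrix (Fin n) (Fin n) ℝ × (Fin n → ℝ)} :
    p ∈ parabolic n q ↔ p.1ᵀ = -p.1 ∧ p.1 *ᵥ q + p.2 = (p.2 ⬝ᵥ q) • q := Iff.rfl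

set_option maxHeartbeats 1000000 in
/-- For pairwise distinct unit vectors `q₁, q₂, q₃`, one has
`𝔰𝔬(n,1) = 𝔭₁ + (𝔭₂ ∩ 𝔭₃)`. -/
theorem stmt13 {n : ℕ} (q₁ q₂ q₃ : Fin n → ℝ)
    (hq₁ : q₁ ⬝ᵥ q₁ = 1) (hq₂ : q₂ ⬝ᵥ q₂ = 1) (hq₃ : q₃ ⬝ᵥ q₃ = 1)
    (h12 : q₁ ≠ q₂) (h13 : q₁ ≠ q₃) (h23 : q₂ ≠ q₃) :
    parabolic n q₁ ⊔ (parabolic n q₂ ⊓ parabolic n q₃) = soN1 n := by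
  apply le_antisymm
  · apply sup_le
    · intro p hp; exact (mem_parabolic.mp hp).1
    · intro p hp; exact (mem_parabolic.mp hp.1).1
  · rintro ⟨A, b⟩ hAmem
    have hA : Aᵀ = -A := hAmem
    set α := q₁ ⬝ᵥ q₂ with hαd
    set β := q₁ ⬝ᵥ q₃ with hβd
    set γ := q₂ ⬝ᵥ q₃ with hγd
    clear_value α β γ
    have hc21 : q₂ ⬝ᵥ q₁ = α := (dotProduct_comm q₂ q₁).trans hαd.symm
    have hc31 : q₃ ⬝ᵥ q₁ = β := (dotProduct_comm q₃ q₁).trans hβd.symm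
    have hc32 : q₃ ⬝ᵥ q₂ = γ := (dotProduct_comm q₃ q₂).trans hγd.symm
    have hxx : (q₁ - q₂) ⬝ᵥ (q₁ - q₂) = 2 - 2 * α := by
      simp only [dotProduct_sub, sub_dotProduct, hq₁, hq₂, hc21, ← hαd]; ring
    have hyy : (q₁ - q₃) ⬝ᵥ (q₁ - q₃) = 2 - 2 * β := by
      simp only [dotProduct_sub, sub_dotProduct, hq₁, hq₃, hc31, ← hβd]; ring
    have hzz : (q₂ - q₃) ⬝ᵥ (q₂ - q₃) = 2 - 2 * γ := by
      simp only [dotProduct_sub, sub_dotProduct, hq₂, hq₃, hc32, ← hγd]; ring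
    have hxy : (q₁ - q₂) ⬝ᵥ (q₁ - q₃) = 1 - β - α + γ := by
      simp only [dotProduct_sub, sub_dotProduct, hq₁, hc21, ← hβd, ← hγd]; ring
    have h2α : (2 : ℝ) - 2 * α ≠ 0 := by
      rw [← hxx, Ne, dotProduct_self_eq_zero, sub_eq_zero]
      exact fun h => h12 h
    have h2β : (2 : ℝ) - 2 * β ≠ 0 := by
      rw [← hyy, Ne, dotProduct_self_eq_zero, sub_eq_zero]
      exact fun h => h13 h
    have h2γ : (2 : ℝ) - 2 * γ ≠ 0 := by
      rw [← hzz, Ne, dotProduct_self_eq_zero, sub_eq_zero]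
      exact fun h => h23 h
    have h1α : (1 : ℝ) - α ≠ 0 := fun h => h2α (by linear_combination 2 * h)
    have h1β : (1 : ℝ) - β ≠ 0 := fun h => h2β (by linear_combination 2 * h)
    have hΔ : ((q₁ - q₂) ⬝ᵥ (q₁ - q₂)) * ((q₁ - q₃) ⬝ᵥ (q₁ - q₃))
        - ((q₁ - q₂) ⬝ᵥ (q₁ - q₃)) ^ 2 ≠ 0 := by
      rw [hxx, hyy, hxy]
      intro h0
      set w := (2 - 2 * β) • (q₁ - q₂) - (1 - β - α + γ) • (q₁ - q₃) with hwd
      have hyx' : (q₁ - q₃) ⬝ᵥ (q₁ - q₂) = 1 - β - α + γ := by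
        rw [dotProduct_comm]; exact hxy
      have hww : w ⬝ᵥ w = (2 - 2 * β) * ((2 - 2 * α) * (2 - 2 * β) - (1 - β - α + γ) ^ 2) := by
        rw [hwd]
        simp only [smul_dotProduct, dotProduct_smul, sub_dotProduct, dotProduct_sub,
          smul_eq_mul, hxx, hyy, hxy, hyx', hq₁, hq₂, hq₃, hc21, hc31, hc32, ← hαd, ← hβd, ← hγd]
        ring
      have hw0 : w = 0 := by
        rw [← dotProduct_self_eq_zero, hww, h0, mul_zero]
      have h1 : (2 - 2 * β) • (q₁ - q₂) = (1 - β - α + γ) • (q₁ - q₃) := by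
        rw [← sub_eq_zero]; exact hw0
      set l := (2 - 2 * β)⁻¹ * (1 - β - α + γ) with hld
      have h2 : q₁ - q₂ = l • (q₁ - q₃) := by
        rw [hld, mul_smul, ← h1, inv_smul_smul₀ h2β]
      have heq : (1 : ℝ) = 1 - 2 * l * (1 - β) + l ^ 2 * (2 - 2 * β) := by
        have hq2' : q₂ = q₁ - l • (q₁ - q₃) := by rw [← h2, sub_sub_cancel]
        have hq1y : q₁ ⬝ᵥ (q₁ - q₃) = 1 - β := by
          simp only [dotProduct_sub, hq₁, hβd]
        have hyq1 : (q₁ - q₃) ⬝ᵥ q₁ = 1 - β := by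
          rw [dotProduct_comm]; exact hq1y
        calc (1 : ℝ) = q₂ ⬝ᵥ q₂ := hq₂.symm
          _ = _ := by
            rw [hq2']
            simp only [dotProduct_sub, sub_dotProduct, dotProduct_smul, smul_dotProduct,
              smul_eq_mul, hq₁, hq₂, hq₃, hc21, hc31, hc32, hq1y, hyq1, hyy, ← hαd, ← hβd, ← hγd]
            ring
      have hfac : l * ((2 - 2 * β) * (l - 1)) = 0 := by linear_combination -heq
      rcases mul_eq_zero.mp hfac with hl | hl
      · exact h12 (by rw [← sub_eq_zero, h2, hl, zero_smul])
      · rcases mul_eq_zero.mp hl with hl' | hl'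
        · exact h2β hl'
        · apply h23
          have hl1 : l = 1 := by linarith [sub_eq_zero.mp hl']
          have h2' := h2
          rw [hl1, one_smul] at h2'
          exact sub_right_inj.mp h2'
    -- the scalar parameters
    set a₁ := (A *ᵥ q₂ ⬝ᵥ q₁ + b ⬝ᵥ q₁ - A *ᵥ q₂ ⬝ᵥ q₂ - b ⬝ᵥ q₂) / (1 - α) with ha₁d
    set a₂ := (A *ᵥ q₃ ⬝ᵥ q₁ + b ⬝ᵥ q₁ - A *ᵥ q₃ ⬝ᵥ q₃ - b ⬝ᵥ q₃) / (1 - β) with ha₂d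
    set t := (a₁ * (α - γ) + a₂ * (β - γ)
        + (A *ᵥ q₂ ⬝ᵥ q₁ + b ⬝ᵥ q₁ - A *ᵥ q₂ ⬝ᵥ q₃ - b ⬝ᵥ q₃)
        + (A *ᵥ q₃ ⬝ᵥ q₁ + b ⬝ᵥ q₁ - A *ᵥ q₃ ⬝ᵥ q₂ - b ⬝ᵥ q₂)) / (2 - 2 * γ) with htd
    set u := t - a₁ with hud
    set v := t - a₂ with hvd
    clear_value a₁ a₂ t u v
    have ha₁' : (1 - α) * a₁
        = A *ᵥ q₂ ⬝ᵥ q₁ + b ⬝ᵥ q₁ - A *ᵥ q₂ ⬝ᵥ q₂ - b ⬝ᵥ q₂ := by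
      rw [ha₁d]; field_simp
    have ha₂' : (1 - β) * a₂
        = A *ᵥ q₃ ⬝ᵥ q₁ + b ⬝ᵥ q₁ - A *ᵥ q₃ ⬝ᵥ q₃ - b ⬝ᵥ q₃ := by
      rw [ha₂d]; field_simp
    have ht' : (2 - 2 * γ) * t = a₁ * (α - γ) + a₂ * (β - γ)
        + (A *ᵥ q₂ ⬝ᵥ q₁ + b ⬝ᵥ q₁ - A *ᵥ q₂ ⬝ᵥ q₃ - b ⬝ᵥ q₃)
        + (A *ᵥ q₃ ⬝ᵥ q₁ + b ⬝ᵥ q₁ - A *ᵥ q₃ ⬝ᵥ q₂ - b ⬝ᵥ q₂) := by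
      rw [htd, mul_div_assoc']; exact mul_div_cancel_left₀ _ h2γ
    have hcx : (t • q₁ + u • q₂ - (A *ᵥ q₂ + b)) ⬝ᵥ (q₁ - q₂) = 0 := by
      simp only [dotProduct_sub, sub_dotProduct, add_dotProduct, smul_dotProduct,
        smul_eq_mul, hq₁, hq₂, hc21, ← hαd]
      rw [hud]
      linear_combination ha₁'
    have hdy : (t • q₁ + v • q₃ - (A *ᵥ q₃ + b)) ⬝ᵥ (q₁ - q₃) = 0 := by
      simp only [dotProduct_sub, sub_dotProduct, add_dotProduct, smul_dotProduct,
        smul_eq_mul, hq₁, hq₃, hc31, ← hβd]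
      rw [hvd]
      linear_combination ha₂'
    have hsum : (t • q₁ + u • q₂ - (A *ᵥ q₂ + b)) ⬝ᵥ (q₁ - q₃)
        + (t • q₁ + v • q₃ - (A *ᵥ q₃ + b)) ⬝ᵥ (q₁ - q₂) = 0 := by
      simp only [dotProduct_sub, sub_dotProduct, add_dotProduct, smul_dotProduct,
        smul_eq_mul, hq₁, hq₂, hq₃, hc21, hc31, hc32, ← hαd, ← hβd, ← hγd]
      rw [hud, hvd]
      linear_combination ht'
    obtain ⟨M, hM, hMx, hMy⟩ := exists_skew (q₁ - q₂) (q₁ - q₃)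
      (t • q₁ + u • q₂ - (A *ᵥ q₂ + b)) (t • q₁ + v • q₃ - (A *ᵥ q₃ + b))
      hΔ hcx hdy hsum
    have hAM : (A - M)ᵀ = -(A - M) := by rw [transpose_sub, hA, hM]; abel
    refine Submodule.mem_sup.mpr ⟨(M, t • q₁ - M *ᵥ q₁), ?_,
      ((A - M, b - (t • q₁ - M *ᵥ q₁)) : Matrix (Fin n) (Fin n) ℝ × (Fin n → ℝ)), ?_, ?_⟩
    · refine mem_parabolic.mpr ⟨hM, ?_⟩
      have hd : (t • q₁ - M *ᵥ q₁) ⬝ᵥ q₁ = t := by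
        simp only [sub_dotProduct, smul_dotProduct, smul_eq_mul, hq₁, skew_self hM q₁]
        ring
      show M *ᵥ q₁ + (t • q₁ - M *ᵥ q₁) = ((t • q₁ - M *ᵥ q₁) ⬝ᵥ q₁) • q₁
      rw [hd]; abel
    · have hMx' : M *ᵥ q₁ - M *ᵥ q₂ = t • q₁ + u • q₂ - (A *ᵥ q₂ + b) := by
        rw [← Matrix.mulVec_sub]; exact hMx
      have hMy' : M *ᵥ q₁ - M *ᵥ q₃ = t • q₁ + v • q₃ - (A *ᵥ q₃ + b) := by
        rw [← Matrix.mulVec_sub]; exact hMy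
      have hL2 : (A - M) *ᵥ q₂ + (b - (t • q₁ - M *ᵥ q₁)) = u • q₂ := by
        calc (A - M) *ᵥ q₂ + (b - (t • q₁ - M *ᵥ q₁))
            = (A *ᵥ q₂ + b) - t • q₁ + (M *ᵥ q₁ - M *ᵥ q₂) := by
              rw [sub_mulVec]; abel
          _ = u • q₂ := by rw [hMx']; abel
      have hL3 : (A - M) *ᵥ q₃ + (b - (t • q₁ - M *ᵥ q₁)) = v • q₃ := by
        calc (A - M) *ᵥ q₃ + (b - (t • q₁ - M *ᵥ q₁))
            = (A *ᵥ q₃ + b) - t • q₁ + (M *ᵥ q₁ - M *ᵥ q₃) := by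
              rw [sub_mulVec]; abel
          _ = v • q₃ := by rw [hMy']; abel
      have hb2 : (b - (t • q₁ - M *ᵥ q₁)) ⬝ᵥ q₂ = u := by
        have hb : b - (t • q₁ - M *ᵥ q₁) = u • q₂ - (A - M) *ᵥ q₂ := by
          rw [← hL2]; abel
        rw [hb]
        simp only [sub_dotProduct, smul_dotProduct, smul_eq_mul, hq₂, skew_self hAM q₂]
        ring
      have hb3 : (b - (t • q₁ - M *ᵥ q₁)) ⬝ᵥ q₃ = v := by
        have hb : b - (t • q₁ - M *ᵥ q₁) = v • q₃ - (A - M) *ᵥ q₃ := by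
          rw [← hL3]; abel
        rw [hb]
        simp only [sub_dotProduct, smul_dotProduct, smul_eq_mul, hq₃, skew_self hAM q₃]
        ring
      refine Submodule.mem_inf.mpr ⟨mem_parabolic.mpr ⟨hAM, ?_⟩, mem_parabolic.mpr ⟨hAM, ?_⟩⟩
      · show (A - M) *ᵥ q₂ + (b - (t • q₁ - M *ᵥ q₁))
            = ((b - (t • q₁ - M *ᵥ q₁)) ⬝ᵥ q₂) • q₂
        rw [hL2, hb2]
      · show (A - M) *ᵥ q₃ + (b - (t • q₁ - M *ᵥ q₁))
            = ((b - (t • q₁ - M *ᵥ q₁)) ⬝ᵥ q₃) • q₃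
        rw [hL3, hb3]
    · show (M + (A - M), (t • q₁ - M *ᵥ q₁) + (b - (t • q₁ - M *ᵥ q₁))) = (A, b)
      refine Prod.ext ?_ ?_ <;> simp only [] <;> abel
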